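/- Let R be a commutative Noetherian ring of prime characteristic p > 0, let I be an ideal of R, and let J ⊆ I be a reduction of I, i.e., there exists w ∈ ℕ with I^{w+1} = J·I^w. If s is a real number with s > μ(J), then the weak s-closure of I equals the tight closure I* of I. -/

import Mathlib

open Pointwise

/-- `R°`: the set of elements of `R` not contained in any minimal prime of `R`. -/
def RCirc (R : Type*) [CommRing R] : Set R :=
  {c | ∀ P ∈ minimalPrimes R, c ∉ P}

/-- The `q`-th Frobenius power `I^[q]` of an ideal `I`, generated by `q`-th powers
of elements of `I`. -/
def frobPow {R : Type*} [CommRing R] (I : Ideal R) (q : ℕ) : Ideal R :=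
  Ideal.span ((fun f => f ^ q) '' (I : Set R))

/-- The `(s,q)` mixed power `I^(s,q) = I^⌈sq⌉ + I^[q]`. -/
noncomputable def mixedPow {R : Type*} [CommRing R] (I : Ideal R) (s : ℝ) (q : ℕ) : Ideal R :=
  I ^ ⌈s * (q : ℝ)⌉₊ + frobPow I q

/-- The weak `s`-closure of `I`: elements `x` such that there is `c ∈ R°` with
`c·x^q ∈ I^(s,q)` for all sufficiently large powers `q = p^e` of `p`. -/
def weakCl {R : Type*} [CommRing R] (p : ℕ) (I : Ideal R) (s : ℝ) : Set R :=
  {x | ∃ c ∈ RCirc R, ∃ N : ℕ, ∀ e : ℕ, N ≤ e → c * x ^ p ^ e ∈ mixedPow I s (p ^ e)}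

/-- The tight closure `I*` of `I`. -/
def tightCl {R : Type*} [CommRing R] (p : ℕ) (I : Ideal R) : Set R :=
  {x | ∃ c ∈ RCirc R, ∃ N : ℕ, ∀ e : ℕ, N ≤ e → c * x ^ p ^ e ∈ frobPow I (p ^ e)}

/-- The integral closure of `I`: elements `x` such that there is `c ∈ R°` with
`c·x^n ∈ I^n` for all sufficiently large `n`. -/
def intCl {R : Type*} [CommRing R] (I : Ideal R) : Set R :=
  {x | ∃ c ∈ RCirc R, ∃ N : ℕ, ∀ n : ℕ, N ≤ n → c * x ^ n ∈ I ^ n}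

/-- The `α`-th rational power `I_α` of `I`, for rational `α = a/b ≥ 0`:
elements `x` with `x^b` in the integral closure of `I^a`. -/
noncomputable def ratPow {R : Type*} [CommRing R] (I : Ideal R) (α : ℚ) : Set R :=
  {x | x ^ α.den ∈ intCl (I ^ α.num.toNat)}

/-- `μ(I)`: the minimal number of generators of `I`. -/
noncomputable def mu {R : Type*} [CommRing R] (I : Ideal R) : ℕ :=
  sInf {m : ℕ | ∃ s : Finset R, s.card = m ∧ Ideal.span (s : Set R) = I}

/-- An ideal has positive height if it is not contained in any minimal prime. -/
def PosHeight {R : Type*} [CommRing R] (I : Ideal R) : Prop :=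
  ∀ P ∈ minimalPrimes R, ¬ I ≤ P

lemma frobPow_mono {R : Type*} [CommRing R] {I J : Ideal R} (h : I ≤ J) (q : ℕ) :
    frobPow I q ≤ frobPow J q :=
  Ideal.span_mono (Set.image_mono h)

lemma pow_mem_frobPow {R : Type*} [CommRing R] {I : Ideal R} {x : R} (hx : x ∈ I) (q : ℕ) :
    x ^ q ∈ frobPow I q :=
  Ideal.subset_span ⟨x, hx, rfl⟩

lemma span_pow_le_frobPow {R : Type*} [CommRing R] (T : Finset R) (q : ℕ) :
    (Ideal.span (T : Set R)) ^ (T.card * q + 1) ≤ frobPow (Ideal.span (T : Set R)) q := by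
  classical
  induction T using Finset.induction_on with
  | empty => simp [Ideal.span_empty]
  | @insert a T' ha ih =>
      rw [Finset.card_insert_of_notMem ha, Finset.coe_insert, Ideal.span_insert]
      have hexp : (T'.card + 1) * q + 1 = q + (T'.card * q + 1) := by ring
      rw [hexp]
      refine le_trans (Ideal.sup_pow_add_le_pow_sup_pow (n := q) (m := T'.card * q + 1))
        (sup_le ?_ ?_)
      · rw [Ideal.span_singleton_pow]
        have : a ^ q ∈ frobPow (Ideal.span {a} ⊔ Ideal.span (T' : Set R)) q :=
          pow_mem_frobPow (Submodule.mem_sup_left (Ideal.mem_span_singleton_self a)) q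
        exact (Ideal.span_singleton_le_iff_mem _).mpr this
      · exact le_trans ih (frobPow_mono le_sup_right q)

lemma red_pow_eq {R : Type*} [CommRing R] {I J : Ideal R} {w : ℕ}
    (hred : I ^ (w + 1) = J * I ^ w) : ∀ n : ℕ, I ^ (w + n) = J ^ n * I ^ w
  | 0 => by simp
  | n + 1 => by
      have h1 : w + (n + 1) = (w + n) + 1 := by ring
      rw [h1, pow_succ, red_pow_eq hred n, mul_assoc, ← pow_succ, hred, ← mul_assoc,
        ← pow_succ]

/-- if `J ⊆ I` is a reduction of `I` (i.e. `I^{w+1} = J·I^w` for some `w`)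
and `s > μ(J)`, then the weak `s`-closure of `I` equals the tight closure of `I`. -/
theorem stmt3 {R : Type*} [CommRing R] [IsNoetherianRing R]
    (p : ℕ) (hp : p.Prime) (hcp : CharP R p)
    (I J : Ideal R) (hJI : J ≤ I) (w : ℕ) (hred : I ^ (w + 1) = J * I ^ w)
    (s : ℝ) (hs : (mu J : ℝ) < s) :
    weakCl p I s = tightCl p I := by
  ext x
  constructor
  · rintro ⟨c, hc, N, h⟩
    -- generators of J
    have hmem : mu J ∈ {m : ℕ | ∃ s : Finset R, s.card = m ∧ Ideal.span (s : Set R) = J} := by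
      apply Nat.sInf_mem
      obtain ⟨S, hS⟩ := IsNoetherian.noetherian J
      exact ⟨S.card, S, rfl, hS⟩
    obtain ⟨T, hTcard, hTspan⟩ := hmem
    set m := mu J with hm
    have hsm : (0 : ℝ) < s - m := by linarith
    obtain ⟨M, hM⟩ := exists_nat_ge ((w + 1 : ℝ) / (s - m))
    refine ⟨c, hc, max N M, fun e he => ?_⟩
    have hq1 : M ≤ p ^ e := by
      calc M ≤ e := le_trans (le_max_right N M) he
        _ ≤ 2 ^ e := (Nat.lt_two_pow_self (n := e)).le
        _ ≤ p ^ e := Nat.pow_le_pow_left hp.two_le e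
    set q : ℕ := p ^ e with hqdef
    -- the numeric inequality : w + m * q + 1 ≤ ⌈s * q⌉₊
    have hnum : w + m * q + 1 ≤ ⌈s * (q : ℝ)⌉₊ := by
      have h1 : (w + 1 : ℝ) ≤ (s - m) * M := by
        rw [div_le_iff₀ hsm] at hM; linarith [hM]
      have h2 : (M : ℝ) ≤ q := by exact_mod_cast hq1
      have h3 : ((w + m * q + 1 : ℕ) : ℝ) ≤ s * q := by
        push_cast
        nlinarith [mul_le_mul_of_nonneg_left h2 hsm.le]
      calc w + m * q + 1 ≤ ⌈((w + m * q + 1 : ℕ) : ℝ)⌉₊ := by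
            rw [Nat.ceil_natCast]
        _ ≤ ⌈s * (q : ℝ)⌉₊ := Nat.ceil_le_ceil h3
    -- mixedPow ≤ frobPow for this q
    have hkey : mixedPow I s q ≤ frobPow I q := by
      have hpowle : I ^ ⌈s * (q : ℝ)⌉₊ ≤ frobPow I q := by
        calc I ^ ⌈s * (q : ℝ)⌉₊ ≤ I ^ (w + (m * q + 1)) := by
              apply Ideal.pow_le_pow_right
              omega
          _ = J ^ (m * q + 1) * I ^ w := red_pow_eq hred _
          _ ≤ J ^ (m * q + 1) := Ideal.mul_le_left
          _ ≤ frobPow J q := by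
              rw [← hTspan, ← hTcard]
              exact span_pow_le_frobPow T q
          _ ≤ frobPow I q := frobPow_mono hJI q
      exact sup_le hpowle le_rfl
    exact hkey (h e (le_trans (le_max_left N M) he))
  · rintro ⟨c, hc, N, h⟩
    refine ⟨c, hc, N, fun e he => ?_⟩
    exact Submodule.mem_sup_right (h e he)
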